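/- Let e, f ≥ 0 be integers. For each n ∈ ℕ let F_n be the fixed-point-centered Blaschke product with free zeros u_{n,1}, …, u_{n,e} ∈ 𝔻 and G_n the fixed-point-centered Blaschke product with free zeros v_{n,1}, …, v_{n,f} ∈ 𝔻, where u_{n,k} → ū_k ∈ closure(𝔻) and v_{n,j} → v̄_j ∈ closure(𝔻) as n → ∞. Set S_F := {ū_k : |ū_k| = 1} and S_G := {v̄_j : |v̄_j| = 1}, and assume 1 ∉ S_F and 1 ∉ S_G. Let F (resp. G) be the fixed-point-centered Blaschke product whose free zeros are the ū_k with |ū_k| < 1 (resp. the v̄_j with |v̄_j| < 1). Then the compositions F_n ∘ G_n converge to F ∘ G uniformly on every compact subset of ℂ̂ ∖ (G^{-1}(S_F) ∪ S_G), where G^{-1}(S_F) is the preimage of S_F under G viewed as a rational self-map of ℂ̂. -/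

import Mathlib

open Filter Metric Set Topology

noncomputable section

/-- The fixed-point-centered Blaschke product with free zeros `a k`, `k ∈ s`, as a map
`ℂ → ℂ`: `B(z) = λ · z · ∏_{k ∈ s} (z - a k)/(1 - conj (a k) z)` where
`λ = ∏_{k ∈ s} (1 - conj (a k))/(1 - a k)` is the unique unimodular constant with `B 1 = 1`. -/
def blaschkeFun {e : ℕ} (s : Finset (Fin e)) (a : Fin e → ℂ) (z : ℂ) : ℂ :=
  (∏ k ∈ s, (1 - (starRingEnd ℂ) (a k)) / (1 - a k)) * z *
    ∏ k ∈ s, (z - a k) / (1 - (starRingEnd ℂ) (a k) * z)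

/-- The denominator of the Blaschke product, vanishing exactly at its poles. -/
def blaschkeDen {e : ℕ} (s : Finset (Fin e)) (a : Fin e → ℂ) (z : ℂ) : ℂ :=
  ∏ k ∈ s, (1 - (starRingEnd ℂ) (a k) * z)

/-- The Blaschke product viewed as a rational self-map of the Riemann sphere
`ℂ̂ = OnePoint ℂ` (it fixes `∞` since it fixes `0` and has degree `≥` its denominator's). -/
def blaschkeSphere {e : ℕ} (s : Finset (Fin e)) (a : Fin e → ℂ) (w : OnePoint ℂ) :
    OnePoint ℂ :=
  Option.elim (show Option ℂ from w) OnePoint.infty fun z =>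
    if blaschkeDen s a z = 0 then OnePoint.infty else OnePoint.some (blaschkeFun s a z)

/-- The standard stereographic embedding of the Riemann sphere `OnePoint ℂ` onto the unit
sphere in `ℝ³`. -/
def sphereEmbed (w : OnePoint ℂ) : ℝ × ℝ × ℝ :=
  Option.elim (show Option ℂ from w) ((0 : ℝ), (0 : ℝ), (1 : ℝ)) fun z =>
    (2 * z.re / (1 + ‖z‖ ^ 2), 2 * z.im / (1 + ‖z‖ ^ 2),
      (‖z‖ ^ 2 - 1) / (‖z‖ ^ 2 + 1))

/-- A (chordal-type) distance on the Riemann sphere inducing its compact Hausdorff topology,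
hence its unique compatible uniform structure. -/
def sphDist (u v : OnePoint ℂ) : ℝ := dist (sphereEmbed u) (sphereEmbed v)

/-- The complex absolute value, as an absolute value built from the norm. -/
def Complex.abs : AbsoluteValue ℂ ℝ := IsAbsoluteValue.toAbsoluteValue (norm : ℂ → ℝ)

lemma Complex.sq_abs (z : ℂ) : Complex.abs z ^ 2 = Complex.normSq z := Complex.sq_norm z
lemma Complex.normSq_eq_abs (z : ℂ) : Complex.normSq z = Complex.abs z ^ 2 :=
  Complex.normSq_eq_norm_sq z
lemma Complex.abs_conj (z : ℂ) : Complex.abs (starRingEnd ℂ z) = Complex.abs z :=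
  Complex.norm_conj z
lemma Complex.abs_ofReal (r : ℝ) : Complex.abs (r : ℂ) = |r| := by
  show ‖(r : ℂ)‖ = |r|
  simp
lemma Complex.continuous_abs : Continuous (fun z : ℂ => Complex.abs z) := continuous_norm
lemma Complex.norm_eq_abs (z : ℂ) : ‖z‖ = Complex.abs z := rfl
lemma dist_eq_cabs (z w : ℂ) : dist z w = Complex.abs (z - w) := dist_eq_norm z w

/-! ### Auxiliary lemmas -/


lemma sphereEmbed_infty : sphereEmbed OnePoint.infty = ((0:ℝ),(0:ℝ),(1:ℝ)) := rfl

lemma sphereEmbed_some (z : ℂ) : sphereEmbed (OnePoint.some z) =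
    (2 * z.re / (1 + Complex.abs z ^ 2), 2 * z.im / (1 + Complex.abs z ^ 2),
      (Complex.abs z ^ 2 - 1) / (Complex.abs z ^ 2 + 1)) := rfl

lemma blaschkeSphere_infty {e : ℕ} (s : Finset (Fin e)) (a : Fin e → ℂ) :
    blaschkeSphere s a OnePoint.infty = OnePoint.infty := rfl

lemma blaschkeSphere_some {e : ℕ} (s : Finset (Fin e)) (a : Fin e → ℂ) (z : ℂ) :
    blaschkeSphere s a (OnePoint.some z) =
      if blaschkeDen s a z = 0 then OnePoint.infty
      else OnePoint.some (blaschkeFun s a z) := rfl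

lemma sphDist_self (u : OnePoint ℂ) : sphDist u u = 0 := dist_self _
lemma sphDist_comm (u v : OnePoint ℂ) : sphDist u v = sphDist v u := dist_comm _ _
lemma sphDist_triangle (u v w : OnePoint ℂ) : sphDist u w ≤ sphDist u v + sphDist v w :=
  dist_triangle _ _ _
lemma sphDist_nonneg (u v : OnePoint ℂ) : 0 ≤ sphDist u v := dist_nonneg

lemma dist_prod3 (a b : ℝ × ℝ × ℝ) :
    dist a b = max |a.1 - b.1| (max |a.2.1 - b.2.1| |a.2.2 - b.2.2|) := by
  simp [Prod.dist_eq, Real.dist_eq]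

lemma my_abs_le_of_sq_le_sq {a b : ℝ} (h : a^2 ≤ b^2) (hb : 0 ≤ b) : |a| ≤ b := by
  rw [abs_le]; constructor <;> nlinarith

lemma one_le_one_add_sq (z : ℂ) : (1:ℝ) ≤ 1 + Complex.abs z ^ 2 :=
  le_add_of_nonneg_right (by positivity)

lemma chordal_sq_sum (z w : ℂ) :
    (2*z.re/(1+Complex.abs z^2) - 2*w.re/(1+Complex.abs w^2))^2
    + (2*z.im/(1+Complex.abs z^2) - 2*w.im/(1+Complex.abs w^2))^2
    + ((Complex.abs z^2 - 1)/(Complex.abs z^2 + 1) - (Complex.abs w^2 - 1)/(Complex.abs w^2 + 1))^2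
    = 4 * (Complex.abs (z-w))^2 / ((1+Complex.abs z^2)*(1+Complex.abs w^2)) := by
  have hz : Complex.abs z^2 = z.re*z.re + z.im*z.im := by
    rw [Complex.sq_abs, Complex.normSq_apply]
  have hw : Complex.abs w^2 = w.re*w.re + w.im*w.im := by
    rw [Complex.sq_abs, Complex.normSq_apply]
  have hzw : Complex.abs (z-w)^2 = (z.re-w.re)*(z.re-w.re) + (z.im-w.im)*(z.im-w.im) := by
    rw [Complex.sq_abs, Complex.normSq_apply, Complex.sub_re, Complex.sub_im]
  rw [hz, hw, hzw]
  have h1 : (0:ℝ) < 1 + (z.re*z.re + z.im*z.im) := by nlinarith [sq_nonneg z.re, sq_nonneg z.im]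
  have h2 : (0:ℝ) < 1 + (w.re*w.re + w.im*w.im) := by nlinarith [sq_nonneg w.re, sq_nonneg w.im]
  have h3 : (z.re*z.re + z.im*z.im) + 1 ≠ 0 := by nlinarith
  have h4 : (w.re*w.re + w.im*w.im) + 1 ≠ 0 := by nlinarith
  field_simp
  ring
-- M4
lemma sphDist_le_two_abs (z w : ℂ) :
    sphDist (OnePoint.some z) (OnePoint.some w) ≤ 2 * Complex.abs (z - w) := by
  have key := chordal_sq_sum z w
  have hz := one_le_one_add_sq z
  have hw := one_le_one_add_sq w
  have hd : (1:ℝ) ≤ (1 + Complex.abs z^2) * (1 + Complex.abs w^2) := by nlinarith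
  have habs : (0:ℝ) ≤ Complex.abs (z - w) := AbsoluteValue.nonneg _ _
  have hsum : (2*z.re/(1+Complex.abs z^2) - 2*w.re/(1+Complex.abs w^2))^2
    + (2*z.im/(1+Complex.abs z^2) - 2*w.im/(1+Complex.abs w^2))^2
    + ((Complex.abs z^2 - 1)/(Complex.abs z^2 + 1) - (Complex.abs w^2 - 1)/(Complex.abs w^2 + 1))^2
      ≤ (2 * Complex.abs (z-w))^2 := by
    rw [key]
    rw [div_le_iff₀ (by nlinarith)]
    nlinarith [sq_nonneg (Complex.abs (z-w))]
  unfold sphDist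
  rw [show sphereEmbed (OnePoint.some z) =
    (2 * z.re / (1 + Complex.abs z ^ 2), 2 * z.im / (1 + Complex.abs z ^ 2),
      (Complex.abs z ^ 2 - 1) / (Complex.abs z ^ 2 + 1)) from rfl,
    show sphereEmbed (OnePoint.some w) =
    (2 * w.re / (1 + Complex.abs w ^ 2), 2 * w.im / (1 + Complex.abs w ^ 2),
      (Complex.abs w ^ 2 - 1) / (Complex.abs w ^ 2 + 1)) from rfl, dist_prod3]
  simp only []
  refine max_le ?_ (max_le ?_ ?_) <;>
  · apply my_abs_le_of_sq_le_sq _ (by positivity)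
    nlinarith [sq_nonneg (2*z.re/(1+Complex.abs z^2) - 2*w.re/(1+Complex.abs w^2)),
      sq_nonneg (2*z.im/(1+Complex.abs z^2) - 2*w.im/(1+Complex.abs w^2)),
      sq_nonneg ((Complex.abs z^2 - 1)/(Complex.abs z^2 + 1) - (Complex.abs w^2 - 1)/(Complex.abs w^2 + 1))]

-- M5
lemma abs_sub_sq_le_sphDist (z w : ℂ) :
    (Complex.abs (z - w))^2 ≤ (sphDist (OnePoint.some z) (OnePoint.some w))^2
      * ((1 + Complex.abs z^2) * (1 + Complex.abs w^2)) := by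
  have key := chordal_sq_sum z w
  set D := sphDist (OnePoint.some z) (OnePoint.some w) with hD
  have h1 : |2*z.re/(1+Complex.abs z^2) - 2*w.re/(1+Complex.abs w^2)| ≤ D := by
    rw [hD]; unfold sphDist
    rw [show sphereEmbed (OnePoint.some z) =
      (2 * z.re / (1 + Complex.abs z ^ 2), 2 * z.im / (1 + Complex.abs z ^ 2),
        (Complex.abs z ^ 2 - 1) / (Complex.abs z ^ 2 + 1)) from rfl,
      show sphereEmbed (OnePoint.some w) =
      (2 * w.re / (1 + Complex.abs w ^ 2), 2 * w.im / (1 + Complex.abs w ^ 2),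
        (Complex.abs w ^ 2 - 1) / (Complex.abs w ^ 2 + 1)) from rfl, dist_prod3]
    exact le_max_left _ _
  have h2 : |2*z.im/(1+Complex.abs z^2) - 2*w.im/(1+Complex.abs w^2)| ≤ D := by
    rw [hD]; unfold sphDist
    rw [show sphereEmbed (OnePoint.some z) =
      (2 * z.re / (1 + Complex.abs z ^ 2), 2 * z.im / (1 + Complex.abs z ^ 2),
        (Complex.abs z ^ 2 - 1) / (Complex.abs z ^ 2 + 1)) from rfl,
      show sphereEmbed (OnePoint.some w) =
      (2 * w.re / (1 + Complex.abs w ^ 2), 2 * w.im / (1 + Complex.abs w ^ 2),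
        (Complex.abs w ^ 2 - 1) / (Complex.abs w ^ 2 + 1)) from rfl, dist_prod3]
    exact le_trans (le_max_left _ _) (le_max_right _ _)
  have h3 : |(Complex.abs z^2 - 1)/(Complex.abs z^2 + 1) - (Complex.abs w^2 - 1)/(Complex.abs w^2 + 1)| ≤ D := by
    rw [hD]; unfold sphDist
    rw [show sphereEmbed (OnePoint.some z) =
      (2 * z.re / (1 + Complex.abs z ^ 2), 2 * z.im / (1 + Complex.abs z ^ 2),
        (Complex.abs z ^ 2 - 1) / (Complex.abs z ^ 2 + 1)) from rfl,
      show sphereEmbed (OnePoint.some w) =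
      (2 * w.re / (1 + Complex.abs w ^ 2), 2 * w.im / (1 + Complex.abs w ^ 2),
        (Complex.abs w ^ 2 - 1) / (Complex.abs w ^ 2 + 1)) from rfl, dist_prod3]
    exact le_trans (le_max_right _ _) (le_max_right _ _)
  have hz := one_le_one_add_sq z
  have hw := one_le_one_add_sq w
  have hDpos : 0 ≤ D := by rw [hD]; exact dist_nonneg
  have hsum : 4 * (Complex.abs (z-w))^2 / ((1+Complex.abs z^2)*(1+Complex.abs w^2)) ≤ 3 * D^2 := by
    rw [← key]
    nlinarith [abs_nonneg (2*z.re/(1+Complex.abs z^2) - 2*w.re/(1+Complex.abs w^2)),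
      sq_abs (2*z.re/(1+Complex.abs z^2) - 2*w.re/(1+Complex.abs w^2)),
      sq_abs (2*z.im/(1+Complex.abs z^2) - 2*w.im/(1+Complex.abs w^2)),
      sq_abs ((Complex.abs z^2 - 1)/(Complex.abs z^2 + 1) - (Complex.abs w^2 - 1)/(Complex.abs w^2 + 1)),
      h1, h2, h3, abs_nonneg (2*z.im/(1+Complex.abs z^2) - 2*w.im/(1+Complex.abs w^2)),
      abs_nonneg ((Complex.abs z^2 - 1)/(Complex.abs z^2 + 1) - (Complex.abs w^2 - 1)/(Complex.abs w^2 + 1))]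
  rw [div_le_iff₀ (by nlinarith)] at hsum
  nlinarith [sq_nonneg D]
-- M2
lemma sphDist_infty_le (z : ℂ) (hz : 1 ≤ Complex.abs z) :
    sphDist (OnePoint.some z) OnePoint.infty ≤ 2 / Complex.abs z := by
  have hz0 : (0:ℝ) < Complex.abs z := lt_of_lt_of_le one_pos hz
  have hre : |z.re| ≤ Complex.abs z := Complex.abs_re_le_norm z
  have him : |z.im| ≤ Complex.abs z := Complex.abs_im_le_norm z
  have hs : (0:ℝ) < 1 + Complex.abs z ^ 2 := by positivity
  unfold sphDist
  rw [show sphereEmbed (OnePoint.some z) =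
    (2 * z.re / (1 + Complex.abs z ^ 2), 2 * z.im / (1 + Complex.abs z ^ 2),
      (Complex.abs z ^ 2 - 1) / (Complex.abs z ^ 2 + 1)) from rfl,
    show sphereEmbed OnePoint.infty = ((0:ℝ),(0:ℝ),(1:ℝ)) from rfl, dist_prod3]
  simp only []
  have h1 : |2 * z.re / (1 + Complex.abs z ^ 2) - 0| ≤ 2 / Complex.abs z := by
    rw [sub_zero, abs_div, abs_of_pos hs, div_le_div_iff₀ hs hz0]
    calc |2 * z.re| * Complex.abs z ≤ (2 * Complex.abs z) * Complex.abs z := by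
          rw [abs_mul]; simp only [abs_two]
          apply mul_le_mul_of_nonneg_right _ (le_of_lt hz0)
          nlinarith
      _ ≤ 2 * (1 + Complex.abs z ^ 2) := by nlinarith
  have h2 : |2 * z.im / (1 + Complex.abs z ^ 2) - 0| ≤ 2 / Complex.abs z := by
    rw [sub_zero, abs_div, abs_of_pos hs, div_le_div_iff₀ hs hz0]
    calc |2 * z.im| * Complex.abs z ≤ (2 * Complex.abs z) * Complex.abs z := by
          rw [abs_mul]; simp only [abs_two]
          apply mul_le_mul_of_nonneg_right _ (le_of_lt hz0)
          nlinarith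
      _ ≤ 2 * (1 + Complex.abs z ^ 2) := by nlinarith
  have h3 : |(Complex.abs z ^ 2 - 1) / (Complex.abs z ^ 2 + 1) - 1| ≤ 2 / Complex.abs z := by
    have hs' : (0:ℝ) < Complex.abs z ^ 2 + 1 := by positivity
    have : (Complex.abs z ^ 2 - 1) / (Complex.abs z ^ 2 + 1) - 1
        = -(2 / (Complex.abs z ^ 2 + 1)) := by field_simp; ring
    rw [this, abs_neg, abs_div, abs_of_pos hs', abs_two, div_le_div_iff₀ hs' hz0]
    nlinarith
  exact max_le h1 (max_le h2 h3)

-- M3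
lemma le_sphDist_infty (z : ℂ) :
    2 / (1 + Complex.abs z ^ 2) ≤ sphDist (OnePoint.some z) OnePoint.infty := by
  have hs : (0:ℝ) < 1 + Complex.abs z ^ 2 := by positivity
  unfold sphDist
  rw [show sphereEmbed (OnePoint.some z) =
    (2 * z.re / (1 + Complex.abs z ^ 2), 2 * z.im / (1 + Complex.abs z ^ 2),
      (Complex.abs z ^ 2 - 1) / (Complex.abs z ^ 2 + 1)) from rfl,
    show sphereEmbed OnePoint.infty = ((0:ℝ),(0:ℝ),(1:ℝ)) from rfl, dist_prod3]
  simp only []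
  have h3 : |(Complex.abs z ^ 2 - 1) / (Complex.abs z ^ 2 + 1) - 1| = 2 / (1 + Complex.abs z ^ 2) := by
    have hs' : (0:ℝ) < Complex.abs z ^ 2 + 1 := by positivity
    have : (Complex.abs z ^ 2 - 1) / (Complex.abs z ^ 2 + 1) - 1
        = -(2 / (Complex.abs z ^ 2 + 1)) := by field_simp; ring
    rw [this, abs_neg, abs_div, abs_of_pos hs', abs_two, add_comm (Complex.abs z ^2)]
  calc 2 / (1 + Complex.abs z ^ 2) = |(Complex.abs z ^ 2 - 1) / (Complex.abs z ^ 2 + 1) - 1| := h3.symm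
    _ ≤ _ := le_trans (le_max_right _ _) (le_max_right _ _)
-- M9
lemma sphDist_to_abs (z₀ : ℂ) (ρ : ℝ) (hρ : 0 < ρ) :
    ∃ δ > 0, ∀ z : ℂ, sphDist (OnePoint.some z) (OnePoint.some z₀) < δ →
      Complex.abs (z - z₀) < ρ := by
  set t := Complex.abs z₀ ^ 2 with ht
  have ht0 : (0:ℝ) ≤ t := by positivity
  set M : ℝ := 2 * (1 + t) with hM
  have hM1 : (1:ℝ) ≤ M := by nlinarith
  set C : ℝ := Real.sqrt ((1 + M^2) * (1 + t)) with hC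
  have hCpos : 0 < C := Real.sqrt_pos.2 (by nlinarith)
  refine ⟨min (1/(1+t)) (ρ/C), lt_min (by positivity) (by positivity), fun z hlt => ?_⟩
  have hδ1 : sphDist (OnePoint.some z) (OnePoint.some z₀) < 1/(1+t) :=
    lt_of_lt_of_le hlt (min_le_left _ _)
  have hδ2 : sphDist (OnePoint.some z) (OnePoint.some z₀) < ρ/C :=
    lt_of_lt_of_le hlt (min_le_right _ _)
  -- step 1 : abs z ≤ M
  have hzM : Complex.abs z ≤ M := by
    rcases le_or_gt (Complex.abs z) 1 with h | h
    · nlinarith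
    · have h1 : 1 ≤ Complex.abs z := le_of_lt h
      have tri : sphDist (OnePoint.some z₀) OnePoint.infty ≤
          sphDist (OnePoint.some z₀) (OnePoint.some z) + sphDist (OnePoint.some z) OnePoint.infty :=
        sphDist_triangle _ _ _
      have hA := le_sphDist_infty z₀
      have hB := sphDist_infty_le z h1
      have hcomm : sphDist (OnePoint.some z₀) (OnePoint.some z)
          = sphDist (OnePoint.some z) (OnePoint.some z₀) := sphDist_comm _ _
      have hz0 : (0:ℝ) < Complex.abs z := lt_of_lt_of_le one_pos h1
      have key : 1/(1+t) ≤ 2 / Complex.abs z := by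
        have : 2/(1+t) ≤ sphDist (OnePoint.some z) (OnePoint.some z₀) + 2/Complex.abs z := by
          calc 2/(1+t) ≤ sphDist (OnePoint.some z₀) OnePoint.infty := hA
            _ ≤ _ := by rw [← hcomm] at hδ1 ⊢; linarith [tri, hB]
        have e : 2/(1+t) = 2*(1/(1+t)) := by ring
        rw [e] at this
        linarith
      rw [div_le_div_iff₀ (by positivity) hz0] at key
      nlinarith
  -- step 2
  have h5 := abs_sub_sq_le_sphDist z z₀
  have hD0 : 0 ≤ sphDist (OnePoint.some z) (OnePoint.some z₀) := sphDist_nonneg _ _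
  have hCsq : C^2 = (1 + M^2) * (1 + t) := Real.sq_sqrt (by nlinarith)
  have hzz : (1 + Complex.abs z ^2) ≤ 1 + M^2 := by nlinarith [Complex.abs.nonneg z]
  have hfin : (Complex.abs (z - z₀))^2 < ρ^2 := by
    have hd2 : (sphDist (OnePoint.some z) (OnePoint.some z₀))^2 < (ρ/C)^2 := by
      apply sq_lt_sq' _ hδ2; nlinarith
    have hb : (sphDist (OnePoint.some z) (OnePoint.some z₀))^2
        * ((1 + Complex.abs z^2) * (1 + t)) < (ρ/C)^2 * ((1+M^2)*(1+t)) := by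
      apply lt_of_le_of_lt (b := (sphDist (OnePoint.some z) (OnePoint.some z₀))^2 * ((1+M^2)*(1+t)))
      · apply mul_le_mul_of_nonneg_left _ (by positivity)
        apply mul_le_mul_of_nonneg_right hzz (by positivity)
      · apply mul_lt_mul_of_pos_right hd2 (by nlinarith)
    have : (ρ/C)^2 * ((1+M^2)*(1+t)) = ρ^2 := by
      rw [div_pow, ← hCsq]; field_simp
    nlinarith [h5]
  nlinarith [Complex.abs.nonneg (z - z₀)]

-- M6
lemma sphDist_eq_zero_iff {u v : OnePoint ℂ} (h : sphDist u v = 0) : u = v := by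
  match u, v with
  | OnePoint.infty, OnePoint.infty => rfl
  | OnePoint.infty, OnePoint.some w =>
    exfalso
    rw [sphDist_comm] at h
    have h2 := le_sphDist_infty w
    rw [h] at h2
    have : (0:ℝ) < 2/(1 + Complex.abs w ^2) := by positivity
    linarith
  | OnePoint.some z, OnePoint.infty =>
    exfalso
    have h2 := le_sphDist_infty z
    rw [h] at h2
    have : (0:ℝ) < 2/(1 + Complex.abs z ^2) := by positivity
    linarith
  | OnePoint.some z, OnePoint.some w =>
    have h5 := abs_sub_sq_le_sphDist z w
    rw [h] at h5
    norm_num at h5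
    have habs : Complex.abs (z - w) = 0 := by rw [h5, sub_self, map_zero]
    exact congrArg OnePoint.some (sub_eq_zero.mp (Complex.abs.eq_zero.mp habs))
lemma continuous_sphereEmbed : Continuous sphereEmbed := by
  rw [continuous_iff_continuousAt]
  intro w
  match w with
  | OnePoint.infty =>
    rw [OnePoint.continuousAt_infty']
    rw [Metric.tendsto_nhds]
    intro ε hε
    rw [Filter.eventually_iff, Filter.hasBasis_coclosedCompact.mem_iff]
    refine ⟨Metric.closedBall 0 (max 1 (2/ε)), ⟨isClosed_closedBall, isCompact_closedBall _ _⟩, ?_⟩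
    intro z hz
    simp only [Set.mem_compl_iff, Metric.mem_closedBall, dist_zero_right, not_le, Complex.norm_eq_abs] at hz
    simp only [Set.mem_setOf_eq, Function.comp_apply]
    have h1 : 1 ≤ Complex.abs z := le_of_lt (lt_of_le_of_lt (le_max_left _ _) hz)
    have h2 : 2/ε < Complex.abs z := lt_of_le_of_lt (le_max_right _ _) hz
    have h0 : (0:ℝ) < Complex.abs z := lt_of_lt_of_le one_pos h1
    have := sphDist_infty_le z h1
    have hlt : 2 / Complex.abs z < ε := by
      rw [div_lt_iff₀ h0]
      rw [div_lt_iff₀ hε] at h2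
      nlinarith
    calc dist (sphereEmbed (OnePoint.some z)) (sphereEmbed OnePoint.infty)
        = sphDist (OnePoint.some z) OnePoint.infty := rfl
      _ ≤ 2 / Complex.abs z := this
      _ < ε := hlt
  | OnePoint.some z =>
    rw [show (OnePoint.some z : OnePoint ℂ) = (z : OnePoint ℂ) from rfl, OnePoint.continuousAt_coe]
    have hc : Continuous (fun z : ℂ => ((2 * z.re / (1 + Complex.abs z ^ 2), 2 * z.im / (1 + Complex.abs z ^ 2),
      (Complex.abs z ^ 2 - 1) / (Complex.abs z ^ 2 + 1)) : ℝ × ℝ × ℝ)) := by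
      have habs : Continuous (fun z : ℂ => Complex.abs z ^ 2) := (Complex.continuous_abs.pow 2)
      have h1 : Continuous (fun z : ℂ => 2 * z.re / (1 + Complex.abs z ^ 2)) := by
        apply Continuous.div₀ (continuous_const.mul Complex.continuous_re) (continuous_const.add habs)
        intro x; show (1:ℝ) + Complex.abs x ^ 2 ≠ 0; positivity
      have h2 : Continuous (fun z : ℂ => 2 * z.im / (1 + Complex.abs z ^ 2)) := by
        apply Continuous.div₀ (continuous_const.mul Complex.continuous_im) (continuous_const.add habs)
        intro x; show (1:ℝ) + Complex.abs x ^ 2 ≠ 0; positivity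
      have h3 : Continuous (fun z : ℂ => (Complex.abs z ^ 2 - 1) / (Complex.abs z ^ 2 + 1)) := by
        apply Continuous.div₀ (habs.sub continuous_const) (habs.add continuous_const)
        intro x; show Complex.abs x ^ 2 + (1:ℝ) ≠ 0; positivity
      exact h1.prodMk (h2.prodMk h3)
    exact hc.continuousAt.congr (by filter_upwards with x; rfl)

lemma sphBall_mem_nhds (w₀ : OnePoint ℂ) {δ : ℝ} (hδ : 0 < δ) :
    {w | sphDist w w₀ < δ} ∈ 𝓝 w₀ := by
  have hc : Continuous (fun w => sphDist w w₀) :=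
    continuous_sphereEmbed.dist continuous_const
  have : IsOpen {w | sphDist w w₀ < δ} := isOpen_lt hc continuous_const
  exact this.mem_nhds (by simp [Set.mem_setOf_eq, sphDist, dist_self, hδ])
local notation "conj'" => starRingEnd ℂ

-- the Möbius factor
def mobG (α ζ : ℂ) : ℂ := ((1 - conj' α) * (ζ - α)) / ((1 - α) * (1 - conj' α * ζ))

lemma blaschkeFun_eq_prod_mobG {e : ℕ} (s : Finset (Fin e)) (a : Fin e → ℂ) (z : ℂ) :
    blaschkeFun s a z = z * ∏ k ∈ s, mobG (a k) z := by
  unfold blaschkeFun mobG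
  rw [mul_comm (∏ k ∈ s, (1 - (starRingEnd ℂ) (a k)) / (1 - a k)) z, mul_assoc,
    ← Finset.prod_mul_distrib]
  congr 1
  apply Finset.prod_congr rfl
  intro k _
  rw [div_mul_div_comm]

lemma blaschke_norm_identity (a z : ℂ) :
    (Complex.abs (1 - conj' a * z))^2 - (Complex.abs (z - a))^2
      = (1 - Complex.abs a ^ 2) * (1 - Complex.abs z ^ 2) := by
  simp only [Complex.sq_abs]
  simp only [Complex.normSq_apply, Complex.sub_re, Complex.sub_im, Complex.one_re, Complex.one_im,
    Complex.mul_re, Complex.mul_im, Complex.conj_re, Complex.conj_im]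
  ring

lemma abs_one_sub_conj (a : ℂ) : Complex.abs (1 - conj' a) = Complex.abs (1 - a) := by
  rw [show (1 : ℂ) - conj' a = conj' (1 - a) by simp [map_sub]]
  exact Complex.abs_conj _

lemma mobG_abs {α ζ : ℂ} (hα : α ≠ 1) :
    Complex.abs (mobG α ζ) = Complex.abs (ζ - α) / Complex.abs (1 - conj' α * ζ) := by
  unfold mobG
  rw [map_div₀, map_mul, map_mul, abs_one_sub_conj]
  have h1 : Complex.abs (1 - α) ≠ 0 := by
    simp only [ne_eq, map_eq_zero, sub_eq_zero]
    exact fun h => hα h.symm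
  exact mul_div_mul_left _ _ h1

lemma one_le_abs_mobG {α ζ : ℂ} (hα : Complex.abs α < 1) (hζ : 1 ≤ Complex.abs ζ)
    (hden : 1 - conj' α * ζ ≠ 0) : 1 ≤ Complex.abs (mobG α ζ) := by
  have hα1 : α ≠ 1 := by intro h; rw [h] at hα; simp at hα
  rw [mobG_abs hα1, le_div_iff₀ (by
    simpa [Complex.abs.pos_iff] using (Complex.abs.pos_iff.2 hden))]
  have := blaschke_norm_identity α ζ
  have h1 : (1 - Complex.abs α ^ 2) * (1 - Complex.abs ζ ^ 2) ≤ 0 := by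
    apply mul_nonpos_of_nonneg_of_nonpos <;> nlinarith [Complex.abs.nonneg α]
  nlinarith [Complex.abs.nonneg (1 - conj' α * ζ), Complex.abs.nonneg (ζ - α)]

lemma conj_mul_self_of_abs_one {α : ℂ} (h : Complex.abs α = 1) : conj' α * α = 1 := by
  have := Complex.mul_conj α
  rw [mul_comm] at this
  rw [this, Complex.normSq_eq_abs, h]
  norm_num

lemma mobG_boundary {α ζ : ℂ} (hα : Complex.abs α = 1) (h1 : α ≠ 1) (hζ : ζ ≠ α) :
    mobG α ζ = 1 := by
  have hu : conj' α * α = 1 := conj_mul_self_of_abs_one hα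
  have hd1 : (1 : ℂ) - α ≠ 0 := by
    intro h; apply h1; linear_combination -h
  have hd2 : (1 : ℂ) - conj' α * ζ ≠ 0 := by
    intro h
    apply hζ
    have hα0 : α ≠ 0 := by intro h0; rw [h0] at hα; simp at hα
    have hc0 : conj' α ≠ 0 := by simpa using hα0
    have heq : conj' α * ζ = conj' α * α := by rw [hu]; linear_combination -h
    exact mul_left_cancel₀ hc0 heq
  unfold mobG
  rw [div_eq_one_iff_eq (mul_ne_zero hd1 hd2)]
  linear_combination (1 - ζ) * hu

lemma mobG_continuousAt {α ζ : ℂ} (h : (1 - α) * (1 - conj' α * ζ) ≠ 0) :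
    ContinuousAt (fun p : ℂ × ℂ => mobG p.1 p.2) (α, ζ) := by
  unfold mobG
  apply ContinuousAt.div
  · exact ((continuous_const.sub (Complex.continuous_conj.comp continuous_fst)).mul
      (continuous_snd.sub continuous_fst)).continuousAt
  · exact ((continuous_const.sub continuous_fst).mul
      (continuous_const.sub ((Complex.continuous_conj.comp continuous_fst).mul continuous_snd))).continuousAt
  · exact h

-- reciprocal factor
def mobG' (α ζ : ℂ) : ℂ := ((1 - α) * (1 - conj' α * ζ)) / ((1 - conj' α) * (ζ - α))

lemma mobG'_continuousAt {α ζ : ℂ} (h : (1 - conj' α) * (ζ - α) ≠ 0) :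
    ContinuousAt (fun p : ℂ × ℂ => mobG' p.1 p.2) (α, ζ) := by
  unfold mobG'
  apply ContinuousAt.div
  · exact ((continuous_const.sub continuous_fst).mul
      (continuous_const.sub ((Complex.continuous_conj.comp continuous_fst).mul continuous_snd))).continuousAt
  · exact ((continuous_const.sub (Complex.continuous_conj.comp continuous_fst)).mul
      (continuous_snd.sub continuous_fst)).continuousAt
  · exact h

lemma mobG_mul_mobG' {α ζ : ℂ} (h1 : α ≠ 1) (h2 : 1 - conj' α * ζ ≠ 0) (h3 : ζ ≠ α) :
    mobG α ζ * mobG' α ζ = 1 := by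
  have hd1 : (1 : ℂ) - α ≠ 0 := sub_ne_zero.2 (fun h => h1 h.symm)
  have hd1' : (1 : ℂ) - conj' α ≠ 0 := by
    rw [show (1:ℂ) - conj' α = conj' (1 - α) by simp [map_sub]]
    exact (map_ne_zero (starRingEnd ℂ)).mpr hd1
  have hd3 : ζ - α ≠ 0 := sub_ne_zero.2 h3
  unfold mobG mobG'
  field_simp

lemma den_factor_ne {e : ℕ} {s : Finset (Fin e)} {a : Fin e → ℂ} {z : ℂ}
    (h : blaschkeDen s a z ≠ 0) : ∀ k ∈ s, 1 - conj' (a k) * z ≠ 0 :=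
  Finset.prod_ne_zero_iff.1 h

lemma abs_blaschkeFun_ge {e : ℕ} (a : Fin e → ℂ) (z : ℂ)
    (ha : ∀ k, Complex.abs (a k) < 1) (hz : 1 ≤ Complex.abs z)
    (hden : blaschkeDen Finset.univ a z ≠ 0) :
    Complex.abs z ≤ Complex.abs (blaschkeFun Finset.univ a z) := by
  rw [blaschkeFun_eq_prod_mobG, map_mul, map_prod]
  have h1 : (1:ℝ) ≤ ∏ k, Complex.abs (mobG (a k) z) := by
    have := Finset.prod_le_prod (f := fun _ : Fin e => (1:ℝ))
      (g := fun k => Complex.abs (mobG (a k) z)) (s := Finset.univ)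
      (fun i _ => zero_le_one)
      (fun k _ => one_le_abs_mobG (ha k) hz (den_factor_ne hden k (Finset.mem_univ k)))
    simpa using this
  nlinarith [Complex.abs.nonneg z]

-- Case A of the key lemma
lemma keyA {e : ℕ} (ε : ℝ) (hε : 0 < ε) :
    ∃ δ > 0, ∀ (a : Fin e → ℂ) (w : OnePoint ℂ),
      (∀ k, Complex.abs (a k) < 1) → sphDist w OnePoint.infty < δ →
      sphDist (blaschkeSphere Finset.univ a w) OnePoint.infty < ε := by
  set R : ℝ := max 1 (4/ε) with hR
  have hR1 : (1:ℝ) ≤ R := le_max_left _ _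
  have hR0 : (0:ℝ) < R := lt_of_lt_of_le one_pos hR1
  refine ⟨2/(1+R^2), by positivity, fun a w ha hw => ?_⟩
  match w with
  | OnePoint.infty =>
    rw [blaschkeSphere_infty, sphDist_self]; exact hε
  | OnePoint.some z =>
    have h3 := le_sphDist_infty z
    have hzR : R < Complex.abs z := by
      have : 2/(1+Complex.abs z^2) < 2/(1+R^2) := lt_of_le_of_lt h3 hw
      have h1 : (0:ℝ) < 1 + R^2 := by positivity
      have h2 : (0:ℝ) < 1 + Complex.abs z^2 := by positivity
      rw [div_lt_div_iff₀ h2 h1] at this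
      nlinarith [Complex.abs.nonneg z]
    have hz1 : 1 ≤ Complex.abs z := le_of_lt (lt_of_le_of_lt hR1 hzR)
    rw [blaschkeSphere_some]
    by_cases hden : blaschkeDen Finset.univ a z = 0
    · rw [if_pos hden, sphDist_self]; exact hε
    · rw [if_neg hden]
      have hB := abs_blaschkeFun_ge a z ha hz1 hden
      have hB1 : 1 ≤ Complex.abs (blaschkeFun Finset.univ a z) := le_trans hz1 hB
      calc sphDist (OnePoint.some (blaschkeFun Finset.univ a z)) OnePoint.infty
          ≤ 2 / Complex.abs (blaschkeFun Finset.univ a z) := sphDist_infty_le _ hB1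
        _ ≤ 2 / R := by
            apply div_le_div_of_nonneg_left (by norm_num) hR0
            exact le_trans (le_of_lt hzR) hB
        _ < ε := by
            have h4 : 4/ε ≤ R := le_max_right _ _
            rw [div_lt_iff₀ hR0]
            rw [div_le_iff₀ hε] at h4
            nlinarith

lemma one_sub_conj_mul_ne {α z : ℂ} (hα : Complex.abs α = 1) (hz : z ≠ α) :
    1 - conj' α * z ≠ 0 := by
  have hu : conj' α * α = 1 := conj_mul_self_of_abs_one hα
  intro h
  apply hz
  have hα0 : α ≠ 0 := by intro h0; rw [h0] at hα; simp at hα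
  have hc0 : conj' α ≠ 0 := by simpa using hα0
  have heq : conj' α * z = conj' α * α := by rw [hu]; linear_combination -h
  exact mul_left_cancel₀ hc0 heq

lemma phi_continuousAt {e : ℕ} (abar : Fin e → ℂ) (z₀ : ℂ)
    (h : ∀ k, (1 - abar k) * (1 - conj' (abar k) * z₀) ≠ 0) :
    ContinuousAt (fun q : (Fin e → ℂ) × ℂ => q.2 * ∏ k, mobG (q.1 k) q.2) (abar, z₀) := by
  apply ContinuousAt.mul continuousAt_snd
  refine tendsto_finset_prod _ fun k _ => ?_
  have hf : ContinuousAt (fun q : (Fin e → ℂ) × ℂ => ((q.1 k, q.2) : ℂ × ℂ)) (abar, z₀) :=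
    (((continuous_apply k).comp continuous_fst).prodMk continuous_snd).continuousAt
  exact (show ContinuousAt ((fun p : ℂ × ℂ => mobG p.1 p.2) ∘
      (fun q : (Fin e → ℂ) × ℂ => (q.1 k, q.2))) (abar, z₀) from
    ContinuousAt.comp (mobG_continuousAt (h k)) hf)

lemma phi'_continuousAt {e : ℕ} (abar : Fin e → ℂ) (z₀ : ℂ) (hz0 : z₀ ≠ 0)
    (h : ∀ k, (1 - conj' (abar k)) * (z₀ - abar k) ≠ 0) :
    ContinuousAt (fun q : (Fin e → ℂ) × ℂ => q.2⁻¹ * ∏ k, mobG' (q.1 k) q.2) (abar, z₀) := by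
  apply ContinuousAt.mul (continuousAt_snd.inv₀ hz0)
  refine tendsto_finset_prod _ fun k _ => ?_
  have hf : ContinuousAt (fun q : (Fin e → ℂ) × ℂ => ((q.1 k, q.2) : ℂ × ℂ)) (abar, z₀) :=
    (((continuous_apply k).comp continuous_fst).prodMk continuous_snd).continuousAt
  exact (show ContinuousAt ((fun p : ℂ × ℂ => mobG' p.1 p.2) ∘
      (fun q : (Fin e → ℂ) × ℂ => (q.1 k, q.2))) (abar, z₀) from
    ContinuousAt.comp (mobG'_continuousAt (h k)) hf)

lemma den_continuousAt {e : ℕ} (abar : Fin e → ℂ) (z₀ : ℂ) :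
    ContinuousAt (fun q : (Fin e → ℂ) × ℂ => blaschkeDen Finset.univ q.1 q.2) (abar, z₀) := by
  unfold blaschkeDen
  exact tendsto_finset_prod _ fun k _ =>
    (continuous_const.sub (((Complex.continuous_conj.comp
      ((continuous_apply k).comp continuous_fst)).mul continuous_snd))).continuousAt

-- Case C of the key lemma
lemma keyC {e : ℕ} (abar : Fin e → ℂ) (hle : ∀ k, Complex.abs (abar k) ≤ 1)
    (hne1 : ∀ k, abar k ≠ 1) (z₀ : ℂ)
    (hwb : ∀ k, Complex.abs (abar k) = 1 → z₀ ≠ abar k)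
    (hden0 : blaschkeDen (Finset.univ.filter fun k => Complex.abs (abar k) < 1) abar z₀ ≠ 0)
    (ε : ℝ) (hε : 0 < ε) :
    ∃ δ > 0, ∀ (a : Fin e → ℂ) (z : ℂ),
      (∀ k, Complex.abs (a k) < 1) → (∀ k, Complex.abs (a k - abar k) < δ) →
      Complex.abs (z - z₀) < δ →
      sphDist (blaschkeSphere Finset.univ a (OnePoint.some z))
        (blaschkeSphere (Finset.univ.filter fun k => Complex.abs (abar k) < 1) abar
          (OnePoint.some z₀)) < ε := by
  set L := Finset.univ.filter fun k => Complex.abs (abar k) < 1 with hL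
  have hfac2 : ∀ k, 1 - conj' (abar k) * z₀ ≠ 0 := by
    intro k
    by_cases hk : Complex.abs (abar k) < 1
    · exact den_factor_ne hden0 k (by simp [hL, hk])
    · exact one_sub_conj_mul_ne (le_antisymm (hle k) (not_lt.1 hk)) (hwb k (le_antisymm (hle k) (not_lt.1 hk)))
  have hfac : ∀ k, (1 - abar k) * (1 - conj' (abar k) * z₀) ≠ 0 := fun k =>
    mul_ne_zero (sub_ne_zero.2 fun h => hne1 k h.symm) (hfac2 k)
  have hΦc := phi_continuousAt abar z₀ hfac
  have hDc := den_continuousAt abar z₀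
  have hD0 : blaschkeDen Finset.univ abar z₀ ≠ 0 :=
    Finset.prod_ne_zero_iff.2 fun k _ => hfac2 k
  have hval : z₀ * ∏ k, mobG (abar k) z₀ = blaschkeFun L abar z₀ := by
    rw [blaschkeFun_eq_prod_mobG]
    congr 1
    exact (Finset.prod_subset (Finset.filter_subset _ _) fun k _ hk => by
      have h1 : Complex.abs (abar k) = 1 := le_antisymm (hle k)
        (not_lt.1 (by simpa [hL] using hk))
      exact mobG_boundary h1 (hne1 k) (hwb k h1)).symm
  -- metric continuity extraction
  rw [Metric.continuousAt_iff] at hΦc hDc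
  obtain ⟨δ₁, hδ₁, h1⟩ := hΦc (ε/4) (by positivity)
  obtain ⟨δ₂, hδ₂, h2⟩ := hDc (Complex.abs (blaschkeDen Finset.univ abar z₀))
    (by simpa [Complex.abs.pos_iff] using hD0)
  refine ⟨min δ₁ δ₂, lt_min hδ₁ hδ₂, fun a z ha hclose hz => ?_⟩
  have hqdist : dist ((a, z) : (Fin e → ℂ) × ℂ) (abar, z₀) < min δ₁ δ₂ := by
    rw [Prod.dist_eq]
    apply max_lt
    · rw [dist_pi_lt_iff (lt_min hδ₁ hδ₂)]
      intro k; rw [dist_eq_cabs]; exact hclose k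
    · rw [dist_eq_cabs]; exact hz
  have hden : blaschkeDen Finset.univ a z ≠ 0 := by
    intro h0
    have := h2 (lt_of_lt_of_le hqdist (min_le_right _ _))
    simp only [h0] at this
    rw [dist_eq_cabs, zero_sub, map_neg_eq_map] at this
    exact lt_irrefl _ this
  have hΦ := h1 (lt_of_lt_of_le hqdist (min_le_left _ _))
  rw [blaschkeSphere_some, if_neg hden, blaschkeSphere_some, if_neg hden0]
  calc sphDist (OnePoint.some (blaschkeFun Finset.univ a z))
        (OnePoint.some (blaschkeFun L abar z₀))
      ≤ 2 * Complex.abs (blaschkeFun Finset.univ a z - blaschkeFun L abar z₀) :=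
        sphDist_le_two_abs _ _
    _ < ε := by
        rw [blaschkeFun_eq_prod_mobG, ← hval]
        rw [dist_eq_cabs] at hΦ
        simp only at hΦ
        nlinarith [hΦ]

-- Case B of the key lemma
lemma keyB {e : ℕ} (abar : Fin e → ℂ) (hle : ∀ k, Complex.abs (abar k) ≤ 1)
    (hne1 : ∀ k, abar k ≠ 1) (z₀ : ℂ)
    (hden0 : blaschkeDen (Finset.univ.filter fun k => Complex.abs (abar k) < 1) abar z₀ = 0)
    (ε : ℝ) (hε : 0 < ε) :
    ∃ δ > 0, ∀ (a : Fin e → ℂ) (z : ℂ),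
      (∀ k, Complex.abs (a k) < 1) → (∀ k, Complex.abs (a k - abar k) < δ) →
      Complex.abs (z - z₀) < δ →
      sphDist (blaschkeSphere Finset.univ a (OnePoint.some z)) OnePoint.infty < ε := by
  obtain ⟨k₀, hk₀mem, hk₀⟩ := Finset.prod_eq_zero_iff.1 hden0
  have hk₀lt : Complex.abs (abar k₀) < 1 := (Finset.mem_filter.1 hk₀mem).2
  have habs : Complex.abs (abar k₀) * Complex.abs z₀ = 1 := by
    have h : conj' (abar k₀) * z₀ = 1 := by linear_combination -hk₀
    have := congrArg Complex.abs h
    rwa [map_mul, map_one, Complex.abs_conj] at this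
  have hz₀gt : 1 < Complex.abs z₀ := by
    rcases le_or_gt (Complex.abs z₀) 1 with h | h
    · nlinarith [Complex.abs.nonneg (abar k₀), Complex.abs.nonneg z₀]
    · exact h
  have hz₀0 : z₀ ≠ 0 := by
    intro h; rw [h] at hz₀gt; rw [map_zero] at hz₀gt; linarith
  have hzne : ∀ k, z₀ - abar k ≠ 0 := by
    intro k h
    have : z₀ = abar k := by linear_combination h
    rw [this] at hz₀gt
    linarith [hle k]
  have hfac : ∀ k, (1 - conj' (abar k)) * (z₀ - abar k) ≠ 0 := by
    intro k
    apply mul_ne_zero _ (hzne k)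
    rw [show (1:ℂ) - conj' (abar k) = conj' (1 - abar k) by simp [map_sub]]
    exact (map_ne_zero (starRingEnd ℂ)).mpr (sub_ne_zero.2 fun h => hne1 k h.symm)
  have hΦc := phi'_continuousAt abar z₀ hz₀0 hfac
  have hval : z₀⁻¹ * ∏ k, mobG' (abar k) z₀ = 0 := by
    rw [Finset.prod_eq_zero (Finset.mem_univ k₀) (by unfold mobG'; rw [hk₀, mul_zero, zero_div]),
      mul_zero]
  rw [Metric.continuousAt_iff] at hΦc
  obtain ⟨δ₁, hδ₁, h1⟩ := hΦc (min (1/2) (ε/4)) (by positivity)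
  set δ := min δ₁ ((Complex.abs z₀ - 1)/2) with hδdef
  refine ⟨δ, lt_min hδ₁ (by linarith), fun a z ha hclose hz => ?_⟩
  have hzgt : 1 < Complex.abs z := by
    have h2 : Complex.abs (z - z₀) < (Complex.abs z₀ - 1)/2 :=
      lt_of_lt_of_le hz (min_le_right _ _)
    have h3 : Complex.abs z₀ - Complex.abs z ≤ Complex.abs (z₀ - z) := by
      have := norm_sub_norm_le z₀ z
      simpa [Complex.norm_eq_abs] using this
    have h4 : Complex.abs (z₀ - z) = Complex.abs (z - z₀) := by
      rw [show z₀ - z = -(z - z₀) by ring, map_neg_eq_map]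
    linarith
  have hz0' : z ≠ 0 := by intro h; rw [h] at hzgt; rw [map_zero] at hzgt; linarith
  rw [blaschkeSphere_some]
  by_cases hden : blaschkeDen Finset.univ a z = 0
  · rw [if_pos hden, sphDist_self]; exact hε
  · rw [if_neg hden]
    -- the product identity B * Φ' = 1
    have hprod : blaschkeFun Finset.univ a z * (z⁻¹ * ∏ k, mobG' (a k) z) = 1 := by
      rw [blaschkeFun_eq_prod_mobG]
      have : z * (∏ k, mobG (a k) z) * (z⁻¹ * ∏ k, mobG' (a k) z)
          = (z * z⁻¹) * ∏ k, (mobG (a k) z * mobG' (a k) z) := by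
        rw [Finset.prod_mul_distrib]; ring
      rw [this, mul_inv_cancel₀ hz0', one_mul]
      apply Finset.prod_eq_one
      intro k _
      apply mobG_mul_mobG'
      · intro h; have := ha k; rw [h] at this; simp at this
      · exact den_factor_ne hden k (Finset.mem_univ k)
      · intro h; rw [h] at hzgt; linarith [ha k, hzgt]
    -- Φ' is small
    have hqdist : dist ((a, z) : (Fin e → ℂ) × ℂ) (abar, z₀) < δ₁ := by
      rw [Prod.dist_eq]
      apply max_lt
      · rw [dist_pi_lt_iff hδ₁]
        intro k; rw [dist_eq_cabs]
        exact lt_of_lt_of_le (hclose k) (min_le_left _ _)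
      · rw [dist_eq_cabs]; exact lt_of_lt_of_le hz (min_le_left _ _)
    have hsmall := h1 hqdist
    rw [dist_eq_cabs] at hsmall
    simp only [hval, sub_zero] at hsmall
    set Φ := z⁻¹ * ∏ k, mobG' (a k) z with hΦdef
    have hΦabs : Complex.abs (blaschkeFun Finset.univ a z) * Complex.abs Φ = 1 := by
      rw [← map_mul, hprod, map_one]
    have hΦpos : 0 < Complex.abs Φ := by
      rcases lt_or_eq_of_le (Complex.abs.nonneg Φ) with h | h
      · exact h
      · exfalso; rw [← h] at hΦabs; simp at hΦabs
    have hB1 : 1 ≤ Complex.abs (blaschkeFun Finset.univ a z) := by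
      have hle2 : Complex.abs Φ < 1/2 := lt_of_lt_of_le hsmall (min_le_left _ _)
      nlinarith
    calc sphDist (OnePoint.some (blaschkeFun Finset.univ a z)) OnePoint.infty
        ≤ 2 / Complex.abs (blaschkeFun Finset.univ a z) := sphDist_infty_le _ hB1
      _ < ε := by
          have hle4 : Complex.abs Φ < ε/4 := lt_of_lt_of_le hsmall (min_le_right _ _)
          rw [div_lt_iff₀ (by linarith)]
          nlinarith

-- The key local uniform convergence lemma
lemma key {e : ℕ} (abar : Fin e → ℂ) (hle : ∀ k, Complex.abs (abar k) ≤ 1)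
    (hb1 : ∀ k, Complex.abs (abar k) = 1 → abar k ≠ 1)
    (w₀ : OnePoint ℂ) (hw : ∀ k, Complex.abs (abar k) = 1 → w₀ ≠ OnePoint.some (abar k))
    (ε : ℝ) (hε : 0 < ε) :
    ∃ δ > 0, ∀ (a : Fin e → ℂ) (w : OnePoint ℂ),
      (∀ k, Complex.abs (a k) < 1) → (∀ k, Complex.abs (a k - abar k) < δ) →
      sphDist w w₀ < δ →
      sphDist (blaschkeSphere Finset.univ a w)
        (blaschkeSphere (Finset.univ.filter fun k => Complex.abs (abar k) < 1) abar w₀) < ε := by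
  have hne1 : ∀ k, abar k ≠ 1 := by
    intro k
    by_cases h : Complex.abs (abar k) = 1
    · exact hb1 k h
    · intro heq; apply h; rw [heq]; simp
  match w₀ with
  | OnePoint.infty =>
    obtain ⟨δA, hδA, hA⟩ := keyA (e := e) ε hε
    exact ⟨δA, hδA, fun a w ha _ hsph => by
      rw [blaschkeSphere_infty]; exact hA a w ha hsph⟩
  | OnePoint.some z₀ =>
    have hwb : ∀ k, Complex.abs (abar k) = 1 → z₀ ≠ abar k := by
      intro k h1 heq
      exact hw k h1 (by rw [heq])
    by_cases hden0 : blaschkeDen (Finset.univ.filter fun k => Complex.abs (abar k) < 1) abar z₀ = 0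
    · obtain ⟨δB, hδB, hB⟩ := keyB abar hle hne1 z₀ hden0 ε hε
      obtain ⟨δs, hδs, hs⟩ := sphDist_to_abs z₀ δB hδB
      set δinf : ℝ := 2/(1 + Complex.abs z₀^2) with hδinfdef
      have hδinf : 0 < δinf := by positivity
      refine ⟨min δB (min δs δinf), lt_min hδB (lt_min hδs hδinf), fun a w ha hclose hsph => ?_⟩
      match w with
      | OnePoint.infty =>
        exfalso
        have h1 := le_sphDist_infty z₀
        rw [sphDist_comm] at h1
        have := lt_of_lt_of_le hsph (le_trans (min_le_right _ _) (min_le_right _ _))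
        linarith
      | OnePoint.some z =>
        have habs : Complex.abs (z - z₀) < δB :=
          hs z (lt_of_lt_of_le hsph (le_trans (min_le_right _ _) (min_le_left _ _)))
        have hclose' : ∀ k, Complex.abs (a k - abar k) < δB :=
          fun k => lt_of_lt_of_le (hclose k) (min_le_left _ _)
        have htgt : blaschkeSphere (Finset.univ.filter fun k => Complex.abs (abar k) < 1)
            abar (OnePoint.some z₀) = OnePoint.infty := by
          rw [blaschkeSphere_some, if_pos hden0]
        rw [htgt]
        exact hB a z ha hclose' habs
    · obtain ⟨δC, hδC, hC⟩ := keyC abar hle hne1 z₀ hwb hden0 ε hε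
      obtain ⟨δs, hδs, hs⟩ := sphDist_to_abs z₀ δC hδC
      set δinf : ℝ := 2/(1 + Complex.abs z₀^2) with hδinfdef
      have hδinf : 0 < δinf := by positivity
      refine ⟨min δC (min δs δinf), lt_min hδC (lt_min hδs hδinf), fun a w ha hclose hsph => ?_⟩
      match w with
      | OnePoint.infty =>
        exfalso
        have h1 := le_sphDist_infty z₀
        rw [sphDist_comm] at h1
        have := lt_of_lt_of_le hsph (le_trans (min_le_right _ _) (min_le_right _ _))
        linarith
      | OnePoint.some z =>
        have habs : Complex.abs (z - z₀) < δC :=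
          hs z (lt_of_lt_of_le hsph (le_trans (min_le_right _ _) (min_le_left _ _)))
        have hclose' : ∀ k, Complex.abs (a k - abar k) < δC :=
          fun k => lt_of_lt_of_le (hclose k) (min_le_left _ _)
        exact hC a z ha hclose' habs

lemma exists_pos_le_finset {e : ℕ} (f : Fin e → ℝ) (p : Fin e → Prop) [DecidablePred p]
    (hf : ∀ k, p k → 0 < f k) :
    ∃ c > 0, ∀ k, p k → c ≤ f k := by
  classical
  rcases (Finset.univ.filter p).eq_empty_or_nonempty with h | h
  · refine ⟨1, one_pos, fun k hk => absurd ?_ (by simp [h] : k ∉ Finset.univ.filter p)⟩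
    simp [hk]
  · refine ⟨(Finset.univ.filter p).inf' h f, ?_, fun k hk => Finset.inf'_le f (by simp [hk])⟩
    rw [gt_iff_lt, Finset.lt_inf'_iff]
    intro k hk
    exact hf k (by simpa using hk)

-- Continuity of the limit Blaschke sphere map, derived from `key`
lemma contBar {e : ℕ} (abar : Fin e → ℂ) (hle : ∀ k, Complex.abs (abar k) ≤ 1)
    (hb1 : ∀ k, Complex.abs (abar k) = 1 → abar k ≠ 1)
    (w₀ : OnePoint ℂ) (hw : ∀ k, Complex.abs (abar k) = 1 → w₀ ≠ OnePoint.some (abar k))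
    (ε : ℝ) (hε : 0 < ε) :
    ∃ δ > 0, ∀ w : OnePoint ℂ, sphDist w w₀ < δ →
      sphDist (blaschkeSphere (Finset.univ.filter fun k => Complex.abs (abar k) < 1) abar w)
        (blaschkeSphere (Finset.univ.filter fun k => Complex.abs (abar k) < 1) abar w₀) < ε := by
  classical
  obtain ⟨c, hc, hcle⟩ := exists_pos_le_finset
    (fun k => sphDist w₀ (OnePoint.some (abar k)))
    (fun k => Complex.abs (abar k) = 1)
    (fun k hk => by
      rcases lt_or_eq_of_le (sphDist_nonneg w₀ (OnePoint.some (abar k))) with h | h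
      · exact h
      · exact absurd (sphDist_eq_zero_iff h.symm) (hw k hk))
  obtain ⟨δ₀, hδ₀, h₀⟩ := key abar hle hb1 w₀ hw (ε/2) (by positivity)
  refine ⟨min δ₀ (c/2), lt_min hδ₀ (by positivity), fun w hsph => ?_⟩
  have hww : ∀ k, Complex.abs (abar k) = 1 → w ≠ OnePoint.some (abar k) := by
    intro k hk heq
    have h1 := hcle k hk
    rw [← heq] at h1
    rw [sphDist_comm] at h1
    have := lt_of_lt_of_le hsph (min_le_right _ _)
    linarith
  obtain ⟨δw, hδw, hkw⟩ := key abar hle hb1 w hww (ε/2) (by positivity)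
  -- construct strictly interior approximating zeros
  set η : ℝ := min 1 (min δ₀ δw) with hη
  have hη0 : 0 < η := lt_min one_pos (lt_min hδ₀ hδw)
  have hη1 : η ≤ 1 := min_le_left _ _
  set a : Fin e → ℂ := fun k => ((1 - η/2 : ℝ) : ℂ) * abar k with ha
  have hr0 : (0:ℝ) ≤ 1 - η/2 := by linarith
  have haabs : ∀ k, Complex.abs (a k) < 1 := by
    intro k
    rw [ha]
    simp only [map_mul, Complex.abs_ofReal, abs_of_nonneg hr0]
    nlinarith [hle k, Complex.abs.nonneg (abar k)]
  have haclose : ∀ k, Complex.abs (a k - abar k) < η := by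
    intro k
    rw [ha]
    have : ((1 - η/2 : ℝ) : ℂ) * abar k - abar k = -(((η/2 : ℝ) : ℂ) * abar k) := by
      push_cast; ring
    rw [this, map_neg_eq_map, map_mul, Complex.abs_ofReal, abs_of_nonneg (by linarith)]
    nlinarith [hle k, Complex.abs.nonneg (abar k)]
  have h1 := h₀ a w haabs
    (fun k => lt_of_lt_of_le (haclose k) (le_trans (min_le_right _ _) (min_le_left _ _)))
    (lt_of_lt_of_le hsph (min_le_left _ _))
  have h2 := hkw a w haabs
    (fun k => lt_of_lt_of_le (haclose k) (le_trans (min_le_right _ _) (min_le_right _ _)))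
    (by rw [sphDist_self]; exact hδw)
  calc sphDist (blaschkeSphere (Finset.univ.filter fun k => Complex.abs (abar k) < 1) abar w)
        (blaschkeSphere (Finset.univ.filter fun k => Complex.abs (abar k) < 1) abar w₀)
      ≤ sphDist (blaschkeSphere (Finset.univ.filter fun k => Complex.abs (abar k) < 1) abar w)
          (blaschkeSphere Finset.univ a w)
        + sphDist (blaschkeSphere Finset.univ a w)
          (blaschkeSphere (Finset.univ.filter fun k => Complex.abs (abar k) < 1) abar w₀) :=
        sphDist_triangle _ _ _
    _ < ε := by
        rw [sphDist_comm] at h2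
        linarith

/-- Under degeneration of the free zeros, compositions of fixed-point-
centered Blaschke products converge: `F_n ∘ G_n → F ∘ G` uniformly on every compact subset of
`ℂ̂ ∖ (G⁻¹(S_F) ∪ S_G)`, where `S_F = {ū k : |ū k| = 1}` and `S_G = {v̄ j : |v̄ j| = 1}`. -/
theorem blaschke_composition_degenerate_convergence
    (e₁ e₂ : ℕ)
    (u : ℕ → Fin e₁ → ℂ) (ubar : Fin e₁ → ℂ)
    (v : ℕ → Fin e₂ → ℂ) (vbar : Fin e₂ → ℂ)
    (hu : ∀ n k, ‖u n k‖ < 1)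
    (hv : ∀ n j, ‖v n j‖ < 1)
    (humem : ∀ k, ubar k ∈ closure (Metric.ball (0 : ℂ) 1))
    (hvmem : ∀ j, vbar j ∈ closure (Metric.ball (0 : ℂ) 1))
    (huc : ∀ k, Tendsto (fun n => u n k) atTop (𝓝 (ubar k)))
    (hvc : ∀ j, Tendsto (fun n => v n j) atTop (𝓝 (vbar j)))
    (hSF : ∀ k, ‖ubar k‖ = 1 → ubar k ≠ 1)
    (hSG : ∀ j, ‖vbar j‖ = 1 → vbar j ≠ 1) :
    ∀ K : Set (OnePoint ℂ), IsCompact K →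
      (∀ w ∈ K,
        (∀ j, ‖vbar j‖ = 1 → w ≠ OnePoint.some (vbar j)) ∧
        (∀ k, ‖ubar k‖ = 1 →
          blaschkeSphere (Finset.univ.filter fun j => ‖vbar j‖ < 1) vbar w ≠
            OnePoint.some (ubar k))) →
      ∀ ε : ℝ, 0 < ε → ∀ᶠ n in atTop, ∀ w ∈ K,
        sphDist
          (blaschkeSphere Finset.univ (u n) (blaschkeSphere Finset.univ (v n) w))
          (blaschkeSphere (Finset.univ.filter fun k => ‖ubar k‖ < 1) ubar
            (blaschkeSphere (Finset.univ.filter fun j => ‖vbar j‖ < 1) vbar w))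
          < ε := by
  intro K hK hKcond ε hε
  classical
  have hule : ∀ k, Complex.abs (ubar k) ≤ 1 := by
    intro k
    have := humem k
    rw [closure_ball (0:ℂ) one_ne_zero, Metric.mem_closedBall, dist_eq_cabs, sub_zero] at this
    exact this
  have hvle : ∀ j, Complex.abs (vbar j) ≤ 1 := by
    intro j
    have := hvmem j
    rw [closure_ball (0:ℂ) one_ne_zero, Metric.mem_closedBall, dist_eq_cabs, sub_zero] at this
    exact this
  set G : OnePoint ℂ → OnePoint ℂ :=
    blaschkeSphere (Finset.univ.filter fun j => Complex.abs (vbar j) < 1) vbar with hGdef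
  -- main local statement
  have main : ∀ w₀ ∈ K, ∃ δU > 0, ∀ᶠ n in atTop, ∀ w : OnePoint ℂ, sphDist w w₀ < δU →
      sphDist (blaschkeSphere Finset.univ (u n) (blaschkeSphere Finset.univ (v n) w))
        (blaschkeSphere (Finset.univ.filter fun k => Complex.abs (ubar k) < 1) ubar (G w))
        < ε := by
    intro w₀ hw₀K
    obtain ⟨hcond1, hcond2⟩ := hKcond w₀ hw₀K
    obtain ⟨δF, hδF, hkeyF⟩ := key ubar hule hSF (G w₀) (hcond2 · ·) (ε/2) (by positivity)
    obtain ⟨δF', hδF', hcontF⟩ := contBar ubar hule hSF (G w₀) (hcond2 · ·) (ε/2) (by positivity)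
    obtain ⟨δG, hδG, hkeyG⟩ := key vbar hvle hSG w₀ (hcond1 · ·) (min δF δF')
      (lt_min hδF hδF')
    obtain ⟨δG', hδG', hcontG⟩ := contBar vbar hvle hSG w₀ (hcond1 · ·) δF' hδF'
    refine ⟨min δG δG', lt_min hδG hδG', ?_⟩
    have hun : ∀ᶠ n in atTop, ∀ k, Complex.abs (u n k - ubar k) < δF := by
      rw [eventually_all]
      intro k
      have := (huc k) (Metric.ball_mem_nhds (ubar k) hδF)
      rw [Filter.mem_map] at this
      filter_upwards [this] with n hn
      rw [Set.mem_preimage, Metric.mem_ball, dist_eq_cabs] at hn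
      exact hn
    have hvn : ∀ᶠ n in atTop, ∀ j, Complex.abs (v n j - vbar j) < δG := by
      rw [eventually_all]
      intro j
      have := (hvc j) (Metric.ball_mem_nhds (vbar j) hδG)
      rw [Filter.mem_map] at this
      filter_upwards [this] with n hn
      rw [Set.mem_preimage, Metric.mem_ball, dist_eq_cabs] at hn
      exact hn
    filter_upwards [hun, hvn] with n hun' hvn' w hwball
    have hGn : sphDist (blaschkeSphere Finset.univ (v n) w) (G w₀) < min δF δF' :=
      hkeyG (v n) w (hv n) hvn' (lt_of_lt_of_le hwball (min_le_left _ _))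
    have hFn : sphDist
        (blaschkeSphere Finset.univ (u n) (blaschkeSphere Finset.univ (v n) w))
        (blaschkeSphere (Finset.univ.filter fun k => Complex.abs (ubar k) < 1) ubar (G w₀))
        < ε/2 :=
      hkeyF (u n) _ (hu n) hun' (lt_of_lt_of_le hGn (min_le_left _ _))
    have hGw : sphDist (G w) (G w₀) < δF' :=
      hcontG w (lt_of_lt_of_le hwball (min_le_right _ _))
    have hFw : sphDist
        (blaschkeSphere (Finset.univ.filter fun k => Complex.abs (ubar k) < 1) ubar (G w))
        (blaschkeSphere (Finset.univ.filter fun k => Complex.abs (ubar k) < 1) ubar (G w₀))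
        < ε/2 := hcontF (G w) hGw
    calc sphDist (blaschkeSphere Finset.univ (u n) (blaschkeSphere Finset.univ (v n) w))
          (blaschkeSphere (Finset.univ.filter fun k => Complex.abs (ubar k) < 1) ubar (G w))
        ≤ sphDist (blaschkeSphere Finset.univ (u n) (blaschkeSphere Finset.univ (v n) w))
            (blaschkeSphere (Finset.univ.filter fun k => Complex.abs (ubar k) < 1) ubar (G w₀))
          + sphDist
            (blaschkeSphere (Finset.univ.filter fun k => Complex.abs (ubar k) < 1) ubar (G w₀))
            (blaschkeSphere (Finset.univ.filter fun k => Complex.abs (ubar k) < 1) ubar (G w)) :=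
          sphDist_triangle _ _ _
      _ < ε := by
          have hcomm := sphDist_comm
            (blaschkeSphere (Finset.univ.filter fun k => Complex.abs (ubar k) < 1) ubar (G w₀))
            (blaschkeSphere (Finset.univ.filter fun k => Complex.abs (ubar k) < 1) ubar (G w))
          rw [hcomm]
          linarith
  choose! δU hδU hNU using main
  obtain ⟨t, htK, hcover⟩ := hK.elim_nhds_subcover (fun w₀ => {w | sphDist w w₀ < δU w₀})
    (fun x hx => sphBall_mem_nhds x (hδU x hx))
  have hall : ∀ᶠ n in atTop, ∀ w₀ ∈ t, ∀ w : OnePoint ℂ, sphDist w w₀ < δU w₀ →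
      sphDist (blaschkeSphere Finset.univ (u n) (blaschkeSphere Finset.univ (v n) w))
        (blaschkeSphere (Finset.univ.filter fun k => Complex.abs (ubar k) < 1) ubar (G w))
        < ε := by
    rw [Filter.eventually_all_finset]
    intro w₀ hw₀
    exact hNU w₀ (htK w₀ hw₀)
  filter_upwards [hall] with n hn w hwK
  obtain ⟨w₀, hw₀t, hwU⟩ := Set.mem_iUnion₂.1 (hcover hwK)
  exact hn w₀ hw₀t w hwU
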